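/- With the same setting, if $F$ is five times continuously differentiable with bounded derivatives near $u$, the fourth-order difference $\frac{1}{12P\varepsilon}\big(-\Psi(2P,u) + 8\Psi(P,u) - 8\Psi(-P,u) + \Psi(-2P,u)\big)$ equals $F(u) + O(\varepsilon^4)$ as $\varepsilon \to 0$. -/

import Mathlib

open Set

/-- Bootstrap smoothness: a solution of `f' = ε • F ∘ f` on a unique-diff set is `C⁵`
when `F` is `C⁵`. -/
lemma aux_contDiffOn {X : Type*} [NormedAddCommGroup X] [NormedSpace ℝ X]
    {F : X → X} (hF : ContDiff ℝ 5 F) {f : ℝ → X} {s : Set ℝ}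
    (hs : UniqueDiffOn ℝ s) (ε : ℝ)
    (hd : ∀ t ∈ s, HasDerivWithinAt f (ε • F (f t)) s t) :
    ContDiffOn ℝ 5 f s := by
  have hdiff : DifferentiableOn ℝ f s := fun t ht => (hd t ht).differentiableWithinAt
  have hder : Set.EqOn (derivWithin f s) (fun t => ε • F (f t)) s :=
    fun t ht => (hd t ht).derivWithin (hs t ht)
  have step : ∀ n : ℕ, n ≤ 4 → ContDiffOn ℝ n f s → ContDiffOn ℝ (n + 1 : ℕ) f s := by
    intro n hn hfn
    have : ((n + 1 : ℕ) : WithTop ℕ∞) = (n : WithTop ℕ∞) + 1 := by push_cast; ring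
    rw [this, contDiffOn_succ_iff_derivWithin hs]
    refine ⟨hdiff, by simp, ?_⟩
    have hFf : ContDiffOn ℝ n (fun t => ε • F (f t)) s := by
      exact ((hF.of_le (by exact_mod_cast by omega : (n : WithTop ℕ∞) ≤ 5)).comp_contDiffOn
        hfn).const_smul ε
    exact hFf.congr hder
  have h0 : ContDiffOn ℝ (0 : ℕ) f s := by
    exact contDiffOn_zero.2 hdiff.continuousOn
  have h5 := step 4 (by norm_num) (step 3 (by norm_num) (step 2 (by norm_num)
    (step 1 (by norm_num) (step 0 (by norm_num) h0))))
  exact_mod_cast h5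

/-- Iterated derivatives within a smaller unique-diff set agree with those in a bigger one. -/
lemma aux_subset {X : Type*} [NormedAddCommGroup X] [NormedSpace ℝ X]
    {f : ℝ → X} {s s' : Set ℝ} (hsub : s' ⊆ s)
    (hs : UniqueDiffOn ℝ s) (hs' : UniqueDiffOn ℝ s')
    {n : ℕ} (hf : ContDiffOn ℝ n f s) :
    ∀ k : ℕ, k ≤ n → ∀ x ∈ s', iteratedDerivWithin k f s' x = iteratedDerivWithin k f s x := by
  intro k
  induction k with
  | zero => intro _ x _; simp
  | succ k IH =>
    intro hk x hx
    have hkn : k ≤ n := Nat.le_of_succ_le hk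
    have hdiff : DifferentiableWithinAt ℝ (iteratedDerivWithin k f s) s x :=
      hf.differentiableOn_iteratedDerivWithin
        (by exact_mod_cast (by omega : k < n)) hs x (hsub hx)
    have h1 : HasDerivWithinAt (iteratedDerivWithin k f s)
        (derivWithin (iteratedDerivWithin k f s) s x) s x := hdiff.hasDerivWithinAt
    have h2 : HasDerivWithinAt (iteratedDerivWithin k f s')
        (derivWithin (iteratedDerivWithin k f s) s x) s' x :=
      (h1.mono hsub).congr (fun y hy => IH hkn y hy) (IH hkn x hx)
    rw [iteratedDerivWithin_succ, iteratedDerivWithin_succ,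
      h2.derivWithin (hs' x hx)]

/-- Iterated derivatives of the reflected function. -/
lemma aux_reflect {X : Type*} [NormedAddCommGroup X] [NormedSpace ℝ X]
    {f : ℝ → X} {b : ℝ} (hb : 0 < b) {n : ℕ}
    (hf : ContDiffOn ℝ n f (Set.Icc (-b) b)) :
    ∀ k : ℕ, k ≤ n → ∀ x ∈ Set.Icc (-b) b,
      iteratedDerivWithin k (fun t => f (-t)) (Set.Icc (-b) b) x
        = ((-1 : ℝ)) ^ k • iteratedDerivWithin k f (Set.Icc (-b) b) (-x) := by
  set s : Set ℝ := Set.Icc (-b) b with hsdef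
  have hs : UniqueDiffOn ℝ s := uniqueDiffOn_Icc (by linarith)
  have hmaps : ∀ x ∈ s, -x ∈ s := by
    intro x hx
    simp only [hsdef, mem_Icc] at hx ⊢
    constructor <;> linarith [hx.1, hx.2]
  intro k
  induction k with
  | zero => intro _ x _; simp
  | succ k IH =>
    intro hk x hx
    have hkn : k ≤ n := Nat.le_of_succ_le hk
    have hdiff : DifferentiableWithinAt ℝ (iteratedDerivWithin k f s) s (-x) :=
      hf.differentiableOn_iteratedDerivWithin
        (by exact_mod_cast (by omega : k < n)) hs (-x) (hmaps x hx)
    have h1 : HasDerivWithinAt (iteratedDerivWithin k f s)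
        (derivWithin (iteratedDerivWithin k f s) s (-x)) s (-x) := hdiff.hasDerivWithinAt
    have hneg : HasDerivWithinAt (fun τ : ℝ => -τ) (-1) s x :=
      (hasDerivAt_neg x).hasDerivWithinAt
    have h2 : HasDerivWithinAt (fun τ => iteratedDerivWithin k f s (-τ))
        ((-1 : ℝ) • derivWithin (iteratedDerivWithin k f s) s (-x)) s x :=
      h1.scomp_of_eq x hneg (fun τ hτ => hmaps τ hτ) rfl
    have h3 : HasDerivWithinAt (fun τ => (-1 : ℝ) ^ k • iteratedDerivWithin k f s (-τ))
        ((-1 : ℝ) ^ k • ((-1 : ℝ) • derivWithin (iteratedDerivWithin k f s) s (-x))) s x :=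
      h2.const_smul _
    have h4 : HasDerivWithinAt (iteratedDerivWithin k (fun t => f (-t)) s)
        ((-1 : ℝ) ^ k • ((-1 : ℝ) • derivWithin (iteratedDerivWithin k f s) s (-x))) s x :=
      h3.congr (fun y hy => (IH hkn y hy)) (IH hkn x hx)
    rw [iteratedDerivWithin_succ, h4.derivWithin (hs x hx),
      iteratedDerivWithin_succ]
    rw [smul_smul, pow_succ]

/-- A solution of `f' = ε • G ∘ f` starting at `u` stays in the ball of radius `1/2`
around `u` as long as `ε * M * b ≤ 1/2`. -/
lemma aux_stay {X : Type*} [NormedAddCommGroup X] [NormedSpace ℝ X]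
    (G : X → X) (u : X) (b M ε : ℝ) (f : ℝ → X)
    (hb : 0 < b) (hM : 0 ≤ M) (hε : 0 ≤ ε)
    (hf0 : f 0 = u)
    (hd : ∀ t ∈ Set.Icc (0 : ℝ) b, HasDerivWithinAt f (ε • G (f t)) (Set.Icc 0 b) t)
    (hG : ∀ v ∈ Metric.closedBall u 1, ‖G v‖ ≤ M)
    (hsmall : ε * M * b ≤ 1 / 2) :
    ∀ t ∈ Set.Icc (0 : ℝ) b, ‖f t - u‖ ≤ 1 / 2 := by
  have hcont : ContinuousOn f (Icc 0 b) := fun t ht => (hd t ht).continuousWithinAt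
  set S : Set ℝ := {t : ℝ | ‖f t - u‖ ≤ ε * M * t} with hSdef
  have hεM : 0 ≤ ε * M := mul_nonneg hε hM
  have hclosed : IsClosed (S ∩ Icc 0 b) := by
    have hc2 : ContinuousOn (fun t => ‖f t - u‖ - ε * M * t) (Icc 0 b) :=
      ((hcont.sub continuousOn_const).norm).sub (continuousOn_const.mul continuousOn_id)
    have h3 := hc2.preimage_isClosed_of_isClosed isClosed_Icc (isClosed_Iic (a := (0 : ℝ)))
    have : S ∩ Icc 0 b = Icc 0 b ∩ (fun t => ‖f t - u‖ - ε * M * t) ⁻¹' Iic 0 := by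
      ext t
      simp only [hSdef, mem_inter_iff, mem_setOf_eq, mem_preimage, mem_Iic, and_comm,
        sub_nonpos]
    rw [this]; exact h3
  have h0S : (0 : ℝ) ∈ S := by simp [hSdef, hf0]
  have main : Icc 0 b ⊆ S := by
    apply hclosed.Icc_subset_of_forall_exists_gt h0S
    intro x hx y hy
    obtain ⟨hxS, hx0b⟩ := hx
    have hx0 : (0 : ℝ) ≤ x := hx0b.1
    have hxb : x < b := hx0b.2
    have hfx : ‖f x - u‖ ≤ 1 / 2 := by
      refine le_trans hxS ?_
      nlinarith
    have hcw : ContinuousWithinAt f (Icc 0 b) x := hcont x ⟨hx0, hxb.le⟩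
    have hev : ∀ᶠ τ in nhdsWithin x (Icc 0 b), dist (f τ) (f x) < 1 / 2 :=
      hcw (Metric.ball_mem_nhds (f x) (by norm_num))
    obtain ⟨δ, hδ, hev⟩ := Metric.mem_nhdsWithin_iff.1 hev
    set z : ℝ := min y (min b (x + δ / 2)) with hzdef
    have hxz : x < z := lt_min hy (lt_min hxb (by linarith))
    have hzb : z ≤ b := le_trans (min_le_right _ _) (min_le_left _ _)
    have hzy : z ≤ y := min_le_left _ _
    have hzδ : z ≤ x + δ / 2 := le_trans (min_le_right _ _) (min_le_right _ _)
    have hball : ∀ τ ∈ Icc x z, f τ ∈ Metric.closedBall u 1 := by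
      intro τ hτ
      have hτ0b : τ ∈ Icc 0 b := ⟨le_trans hx0 hτ.1, le_trans hτ.2 hzb⟩
      have hdist : dist τ x < δ := by
        rw [Real.dist_eq, abs_of_nonneg (by linarith [hτ.1])]
        linarith [hτ.2]
      have h5 : ‖f τ - f x‖ < 1 / 2 := by
        have := hev ⟨Metric.mem_ball.2 hdist, hτ0b⟩
        simpa [dist_eq_norm] using this
      rw [Metric.mem_closedBall, dist_eq_norm]
      calc ‖f τ - u‖ = ‖(f τ - f x) + (f x - u)‖ := by abel_nf
        _ ≤ ‖f τ - f x‖ + ‖f x - u‖ := norm_add_le _ _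
        _ ≤ 1 := by linarith [h5]
    have hmv : ‖f z - f x‖ ≤ ε * M * ‖z - x‖ := by
      apply Convex.norm_image_sub_le_of_norm_hasDerivWithin_le
        (f' := fun τ => ε • G (f τ)) ?_ ?_ (convex_Icc x z) ⟨le_rfl, hxz.le⟩ ⟨hxz.le, le_rfl⟩
      · intro τ hτ
        exact (hd τ ⟨le_trans hx0 hτ.1, le_trans hτ.2 hzb⟩).mono
          (Icc_subset_Icc (by linarith [hτ.1, hx0]) hzb)
      · intro τ hτ
        rw [norm_smul, Real.norm_eq_abs, abs_of_nonneg hε]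
        exact mul_le_mul_of_nonneg_left (hG _ (hball τ hτ)) hε
    refine ⟨z, ?_, hxz, hzy⟩
    have : ‖z - x‖ = z - x := by rw [Real.norm_eq_abs, abs_of_nonneg (by linarith)]
    rw [this] at hmv
    show ‖f z - u‖ ≤ ε * M * z
    calc ‖f z - u‖ = ‖(f z - f x) + (f x - u)‖ := by abel_nf
      _ ≤ ‖f z - f x‖ + ‖f x - u‖ := norm_add_le _ _
      _ ≤ ε * M * (z - x) + ε * M * x := by exact add_le_add hmv hxS
      _ = ε * M * z := by ring
  intro t ht
  refine le_trans (main ht) ?_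
  nlinarith [ht.1, ht.2]


/-- Bounds on iterated derivatives of the solution of `f' = ε • F ∘ f`. -/
lemma aux_deriv_bound {X : Type*} [NormedAddCommGroup X] [NormedSpace ℝ X]
    {F : X → X} {u : X} (hF : ContDiff ℝ 5 F) {f : ℝ → X} {s : Set ℝ}
    (hs : UniqueDiffOn ℝ s) {ε M : ℝ} (hε : 0 ≤ ε) (hM : 0 ≤ M)
    (hd : ∀ t ∈ s, HasDerivWithinAt f (ε • F (f t)) s t)
    (hball : ∀ t ∈ s, f t ∈ Metric.closedBall u 1)
    (hFb : ∀ i : ℕ, i ≤ 4 → ∀ v ∈ Metric.closedBall u 1, ‖iteratedFDeriv ℝ i F v‖ ≤ M) :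
    ∀ k : ℕ, 1 ≤ k → k ≤ 5 → ∀ t ∈ s,
      ‖iteratedDerivWithin k f s t‖ ≤ (ε * (24 * (M + 1))) ^ k := by
  have hcd : ContDiffOn ℝ 5 f s := aux_contDiffOn hF hs ε hd
  set Q : ℝ := 24 * (M + 1) with hQdef
  have hQ1 : (1 : ℝ) ≤ Q := by simp only [hQdef]; linarith
  have hEq : Set.EqOn (derivWithin f s) (ε • (F ∘ f)) s :=
    fun t ht => (hd t ht).derivWithin (hs t ht)
  intro k
  induction k using Nat.strong_induction_on with
  | _ k IH =>
    intro h1k hk5 t ht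
    obtain ⟨k, rfl⟩ : ∃ k', k = k' + 1 := ⟨k - 1, by omega⟩
    have hk4 : k ≤ 4 := by omega
    have hcomp : ContDiffOn ℝ k (F ∘ f) s :=
      (hF.of_le (by exact_mod_cast (by omega : k ≤ 5))).comp_contDiffOn
        (hcd.of_le (by exact_mod_cast (by omega : k ≤ 5)))
    have hstep : iteratedDerivWithin (k + 1) f s t
        = ε • iteratedDerivWithin k (F ∘ f) s t := by
      rw [iteratedDerivWithin_succ', iteratedDerivWithin_congr hEq ht,
        iteratedDerivWithin_const_smul (h := hs) (hx := ht) ε (hcomp t ht)]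
    have hkey : ‖iteratedFDerivWithin ℝ k (F ∘ f) s t‖
        ≤ (k.factorial : ℝ) * M * (ε * Q) ^ k := by
      apply norm_iteratedFDerivWithin_comp_le (N := (5 : WithTop ℕ∞))
        hF.contDiffOn hcd (by exact_mod_cast (by omega : k ≤ 5))
        uniqueDiffOn_univ hs (Set.mapsTo_univ f s) ht
      · intro i hik
        rw [iteratedFDerivWithin_univ]
        exact hFb i (by omega) _ (hball t ht)
      · intro i h1i hik
        rw [norm_iteratedFDerivWithin_eq_norm_iteratedDerivWithin]
        exact IH i (by omega) h1i (by omega) t ht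
    have hfact : (k.factorial : ℝ) ≤ 24 := by
      have : k.factorial ≤ 24 := by
        calc k.factorial ≤ (4 : ℕ).factorial := Nat.factorial_le hk4
          _ = 24 := by norm_num [Nat.factorial]
      exact_mod_cast this
    have hpow : (0 : ℝ) ≤ (ε * Q) ^ k := by positivity
    calc ‖iteratedDerivWithin (k + 1) f s t‖
        = ε * ‖iteratedDerivWithin k (F ∘ f) s t‖ := by
          rw [hstep, norm_smul, Real.norm_eq_abs, abs_of_nonneg hε]
      _ = ε * ‖iteratedFDerivWithin ℝ k (F ∘ f) s t‖ := by
          rw [norm_iteratedFDerivWithin_eq_norm_iteratedDerivWithin]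
      _ ≤ ε * ((k.factorial : ℝ) * M * (ε * Q) ^ k) := by
          exact mul_le_mul_of_nonneg_left hkey hε
      _ ≤ ε * (Q * (ε * Q) ^ k) := by
          apply mul_le_mul_of_nonneg_left _ hε
          apply mul_le_mul_of_nonneg_right _ hpow
          nlinarith
      _ = (ε * Q) ^ (k + 1) := by ring

lemma aux_F_bound {X : Type*} [NormedAddCommGroup X] [NormedSpace ℝ X]
    {F : X → X} {u : X} {M : ℝ}
    (hbound : ∀ v ∈ Metric.closedBall u 1,
      ‖F v‖ ≤ M ∧ ‖fderiv ℝ F v‖ ≤ M ∧ ‖fderiv ℝ (fderiv ℝ F) v‖ ≤ M ∧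
        ‖fderiv ℝ (fderiv ℝ (fderiv ℝ F)) v‖ ≤ M ∧
        @Norm.norm _ ContinuousLinearMap.hasOpNorm (fderiv ℝ (fderiv ℝ (fderiv ℝ (fderiv ℝ F))) v) ≤ M) :
    ∀ i : ℕ, i ≤ 4 → ∀ v ∈ Metric.closedBall u 1, ‖iteratedFDeriv ℝ i F v‖ ≤ M := by
  intro i hi v hv
  obtain ⟨h0, h1, h2, h3, h4⟩ := hbound v hv
  interval_cases i
  · simpa [norm_iteratedFDeriv_zero] using h0
  · rw [show (1:ℕ) = 0+1 by norm_num, ← norm_iteratedFDeriv_fderiv,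
      norm_iteratedFDeriv_zero]
    exact h1
  · rw [show (2:ℕ) = 1+1 by norm_num, ← norm_iteratedFDeriv_fderiv,
      show (1:ℕ) = 0+1 by norm_num, ← norm_iteratedFDeriv_fderiv,
      norm_iteratedFDeriv_zero]
    exact h2
  · rw [show (3:ℕ) = 2+1 by norm_num, ← norm_iteratedFDeriv_fderiv,
      show (2:ℕ) = 1+1 by norm_num, ← norm_iteratedFDeriv_fderiv,
      show (1:ℕ) = 0+1 by norm_num, ← norm_iteratedFDeriv_fderiv,
      norm_iteratedFDeriv_zero]
    exact h3
  · rw [show (4:ℕ) = 3+1 by norm_num, ← norm_iteratedFDeriv_fderiv,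
      show (3:ℕ) = 2+1 by norm_num, ← norm_iteratedFDeriv_fderiv,
      show (2:ℕ) = 1+1 by norm_num, ← norm_iteratedFDeriv_fderiv,
      show (1:ℕ) = 0+1 by norm_num, ← norm_iteratedFDeriv_fderiv,
      norm_iteratedFDeriv_zero]
    exact h4

set_option maxHeartbeats 1000000 in
/-- the fourth-order finite difference
`(-Ψ(2P,u) + 8Ψ(P,u) - 8Ψ(-P,u) + Ψ(-2P,u))/(12Pε)` of the flow of `u' = ε F(u)`
approximates `F(u)` with error `O(ε⁴)`, for `F` of class `C⁵` with bounded
derivatives near `u`; the flow exists for `|t| ≤ 2P` for small `ε`. -/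
theorem statement_9
    {X : Type*} [NormedAddCommGroup X] [NormedSpace ℝ X] [CompleteSpace X]
    (F : X → X) (u : X) (P : ℝ) (hP : 0 < P)
    (hF : ContDiff ℝ 5 F)
    (M : ℝ)
    (hbound : ∀ v ∈ Metric.closedBall u 1,
      ‖F v‖ ≤ M ∧ ‖fderiv ℝ F v‖ ≤ M ∧ ‖fderiv ℝ (fderiv ℝ F) v‖ ≤ M ∧
        ‖fderiv ℝ (fderiv ℝ (fderiv ℝ F)) v‖ ≤ M ∧
        @Norm.norm _ ContinuousLinearMap.hasOpNorm (fderiv ℝ (fderiv ℝ (fderiv ℝ (fderiv ℝ F))) v) ≤ M)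
    (ε₀ : ℝ) (hε₀ : 0 < ε₀)
    -- `Ψ ε t u` is the flow of `u' = ε F(u)`, defined for `|t| ≤ 2P` when `0 < ε ≤ ε₀`
    (Ψ : ℝ → ℝ → X → X)
    (hΨ0 : ∀ ε : ℝ, 0 < ε → ε ≤ ε₀ → Ψ ε 0 u = u)
    (hΨ : ∀ ε : ℝ, 0 < ε → ε ≤ ε₀ → ∀ t : ℝ, |t| ≤ 2 * P →
      HasDerivAt (fun s => Ψ ε s u) (ε • F (Ψ ε t u)) t) :
    ∃ C > 0, ∃ ε₁ > 0, ∀ ε : ℝ, 0 < ε → ε ≤ ε₁ →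
      ‖(1 / (12 * P * ε)) •
          (-Ψ ε (2 * P) u + (8 : ℝ) • Ψ ε P u - (8 : ℝ) • Ψ ε (-P) u + Ψ ε (-(2 * P)) u) -
        F u‖ ≤ C * ε ^ 4 := by
  have hM0 : 0 ≤ M :=
    le_trans (norm_nonneg _) (hbound u (Metric.mem_closedBall_self zero_le_one)).1
  set Q : ℝ := 24 * (M + 1) with hQdef
  have hQ1 : (1 : ℝ) ≤ Q := by simp only [hQdef]; linarith
  have hQ0 : (0 : ℝ) < Q := by linarith
  set b : ℝ := 2 * P with hbdef
  have hb : 0 < b := by simp only [hbdef]; linarith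
  refine ⟨Q ^ 5 * P ^ 4 + 1, by positivity,
    min ε₀ (1 / (4 * P * (M + 1) + 1)), lt_min hε₀ (by positivity), ?_⟩
  intro ε hε hε1
  have hεε₀ : ε ≤ ε₀ := le_trans hε1 (min_le_left _ _)
  have hεs : ε ≤ 1 / (4 * P * (M + 1) + 1) := le_trans hε1 (min_le_right _ _)
  set g : ℝ → X := fun t => Ψ ε t u with hgdef
  set s : Set ℝ := Set.Icc (-b) b with hsdef
  have hsb : UniqueDiffOn ℝ s := uniqueDiffOn_Icc (by linarith)
  have hg0 : g 0 = u := hΨ0 ε hε hεε₀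
  have hder : ∀ t ∈ s, HasDerivAt g (ε • F (g t)) t := by
    intro t ht
    exact hΨ ε hε hεε₀ t (abs_le.mpr ⟨ht.1, ht.2⟩)
  have hds : ∀ t ∈ s, HasDerivWithinAt g (ε • F (g t)) s t :=
    fun t ht => (hder t ht).hasDerivWithinAt
  have hsmall : ε * M * b ≤ 1 / 2 := by
    have h4 : (0 : ℝ) < 4 * P * (M + 1) + 1 := by positivity
    have h1 : ε * (4 * P * (M + 1) + 1) ≤ 1 := (le_div_iff₀ h4).1 hεs
    simp only [hbdef]
    nlinarith [mul_nonneg hε.le (by linarith : (0:ℝ) ≤ 4 * P)]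
  have hdp : ∀ t ∈ Set.Icc (0 : ℝ) b, HasDerivWithinAt g (ε • F (g t)) (Set.Icc 0 b) t := by
    intro t ht
    exact (hder t ⟨by linarith [ht.1], ht.2⟩).hasDerivWithinAt
  have hstayp : ∀ t ∈ Set.Icc (0 : ℝ) b, ‖g t - u‖ ≤ 1 / 2 :=
    aux_stay F u b M ε g hb hM0 hε.le hg0 hdp (fun v hv => (hbound v hv).1) hsmall
  have hg00 : (fun t : ℝ => g (-t)) 0 = u := by simp only [neg_zero]; exact hg0
  have hdm : ∀ t ∈ Set.Icc (0 : ℝ) b, HasDerivWithinAt (fun t : ℝ => g (-t))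
      (ε • (fun v => -F v) ((fun t : ℝ => g (-t)) t)) (Set.Icc 0 b) t := by
    intro t ht
    have hts : -t ∈ s := ⟨by linarith [ht.2], by linarith [ht.1]⟩
    have h1 : HasDerivAt g (ε • F (g (-t))) (-t) := hder (-t) hts
    have h2 : HasDerivAt (fun τ : ℝ => -τ) (-1) t := hasDerivAt_neg t
    have h3 : HasDerivAt (g ∘ fun τ : ℝ => -τ) ((-1 : ℝ) • ε • F (g (-t))) t :=
      h1.scomp_of_eq t h2 rfl
    have e : (-1 : ℝ) • ε • F (g (-t)) = ε • -F (g (-t)) := by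
      rw [neg_one_smul, ← smul_neg]
    rw [e] at h3
    exact h3.hasDerivWithinAt
  have hGm : ∀ v ∈ Metric.closedBall u 1, ‖(fun v => -F v) v‖ ≤ M := by
    intro v hv
    simpa using (hbound v hv).1
  have hstaym : ∀ t ∈ Set.Icc (0 : ℝ) b, ‖g (-t) - u‖ ≤ 1 / 2 :=
    aux_stay (fun v => -F v) u b M ε (fun t : ℝ => g (-t)) hb hM0 hε.le
      hg00 hdm hGm hsmall
  have hball : ∀ t ∈ s, g t ∈ Metric.closedBall u 1 := by
    intro t ht
    rw [Metric.mem_closedBall, dist_eq_norm]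
    rcases le_total 0 t with h | h
    · linarith [hstayp t ⟨h, ht.2⟩]
    · have := hstaym (-t) ⟨by linarith, by linarith [ht.1]⟩
      rw [neg_neg] at this
      linarith
  have hcd : ContDiffOn ℝ 5 g s := aux_contDiffOn hF hsb ε hds
  have hbnd := aux_deriv_bound hF hsb hε.le hM0 hds hball (aux_F_bound hbound)
  have hC5 : ∀ y ∈ s, ‖iteratedDerivWithin 5 g s y‖ ≤ ε ^ 5 * Q ^ 5 := by
    intro y hy
    have h5 := hbnd 5 (by norm_num) (by norm_num) y hy
    rw [mul_pow] at h5
    exact h5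
  have hsub : Set.Icc (0 : ℝ) b ⊆ s := fun x hx => ⟨by linarith [hx.1], hx.2⟩
  have hs' : UniqueDiffOn ℝ (Set.Icc (0 : ℝ) b) := uniqueDiffOn_Icc hb
  set h : ℝ → X := fun t => g (-t) with hhdef
  have hcdh : ContDiffOn ℝ 5 h s := by
    have hmaps : s ⊆ (fun t : ℝ => -t) ⁻¹' s := by
      intro t ht
      have h1 : -t ∈ s := ⟨by linarith [ht.2], by linarith [ht.1]⟩
      exact h1
    exact hcd.comp (contDiff_neg.contDiffOn) hmaps
  have hcdN : ContDiffOn ℝ ((5 : ℕ) : WithTop ℕ∞) g s := by exact_mod_cast hcd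
  have hcdhN : ContDiffOn ℝ ((5 : ℕ) : WithTop ℕ∞) h s := by exact_mod_cast hcdh
  set c : ℕ → X := fun k => iteratedDerivWithin k g s 0 with hcdef
  have h0s : (0 : ℝ) ∈ s := ⟨by linarith, by linarith⟩
  have h0s' : (0 : ℝ) ∈ Set.Icc (0 : ℝ) b := ⟨le_rfl, by linarith⟩
  have hgk : ∀ k : ℕ, k ≤ 5 → iteratedDerivWithin k g (Set.Icc 0 b) 0 = c k :=
    fun k hk => aux_subset hsub hsb hs' hcdN k hk 0 h0s'
  have hrefl := aux_reflect hb hcdN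
  have hhk : ∀ k : ℕ, k ≤ 5 →
      iteratedDerivWithin k h (Set.Icc 0 b) 0 = ((-1 : ℝ)) ^ k • c k := by
    intro k hk
    rw [aux_subset hsub hsb hs' hcdhN k hk 0 h0s']
    have hr := hrefl k hk 0 h0s
    rw [neg_zero] at hr
    exact hr
  have hc1 : c 1 = ε • F u := by
    simp only [hcdef]
    rw [iteratedDerivWithin_one, (hds 0 h0s).derivWithin (hsb 0 h0s), hg0]
  -- Taylor remainder bounds
  have hcdg' : ContDiffOn ℝ ((4 : ℕ) + 1) g (Set.Icc 0 b) := by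
    exact_mod_cast hcd.mono hsub
  have hcdh' : ContDiffOn ℝ ((4 : ℕ) + 1) h (Set.Icc 0 b) := by
    exact_mod_cast hcdh.mono hsub
  have hCg : ∀ y ∈ Set.Icc (0 : ℝ) b,
      ‖iteratedDerivWithin 5 g (Set.Icc 0 b) y‖ ≤ ε ^ 5 * Q ^ 5 := by
    intro y hy
    rw [aux_subset hsub hsb hs' hcdN 5 le_rfl y hy]
    exact hC5 y (hsub hy)
  have hCh : ∀ y ∈ Set.Icc (0 : ℝ) b,
      ‖iteratedDerivWithin 5 h (Set.Icc 0 b) y‖ ≤ ε ^ 5 * Q ^ 5 := by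
    intro y hy
    rw [aux_subset hsub hsb hs' hcdhN 5 le_rfl y hy]
    have hr := hrefl 5 le_rfl y (hsub hy)
    rw [hr, norm_smul]
    have hys : -y ∈ s := by
      have := hsub hy
      exact ⟨by linarith [this.2], by linarith [this.1]⟩
    have := hC5 (-y) hys
    simp only [Real.norm_eq_abs]
    calc |(-1 : ℝ) ^ 5| * ‖iteratedDerivWithin 5 g s (-y)‖
        = ‖iteratedDerivWithin 5 g s (-y)‖ := by norm_num
      _ ≤ ε ^ 5 * Q ^ 5 := this
  have hPmem : P ∈ Set.Icc (0 : ℝ) b := ⟨hP.le, by simp only [hbdef]; linarith⟩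
  have h2Pmem : (2 * P) ∈ Set.Icc (0 : ℝ) b := ⟨by linarith, le_rfl⟩
  have hRg1 := taylor_mean_remainder_bound (n := 4) hb.le hcdg' hPmem hCg
  have hRg2 := taylor_mean_remainder_bound (n := 4) hb.le hcdg' h2Pmem hCg
  have hRh1 := taylor_mean_remainder_bound (n := 4) hb.le hcdh' hPmem hCh
  have hRh2 := taylor_mean_remainder_bound (n := 4) hb.le hcdh' h2Pmem hCh
  -- explicit Taylor polynomials
  have hTg : ∀ x : ℝ, taylorWithinEval g 4 (Set.Icc 0 b) 0 x
      = ∑ k ∈ Finset.range 5, (((k.factorial : ℝ))⁻¹ * x ^ k) • c k := by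
    intro x
    rw [taylor_within_apply]
    refine Finset.sum_congr rfl fun k hk => ?_
    rw [hgk k (le_of_lt (Finset.mem_range.mp hk)), sub_zero]
  have hTh : ∀ x : ℝ, taylorWithinEval h 4 (Set.Icc 0 b) 0 x
      = ∑ k ∈ Finset.range 5, (((k.factorial : ℝ))⁻¹ * x ^ k) • (((-1 : ℝ)) ^ k • c k) := by
    intro x
    rw [taylor_within_apply]
    refine Finset.sum_congr rfl fun k hk => ?_
    rw [hhk k (le_of_lt (Finset.mem_range.mp hk)), sub_zero]
  -- the key algebraic identity
  have key : (-g (2 * P) + (8 : ℝ) • g P - (8 : ℝ) • h P + h (2 * P)) - (12 * P * ε) • F u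
      = -(g (2 * P) - taylorWithinEval g 4 (Set.Icc 0 b) 0 (2 * P))
        + (8 : ℝ) • (g P - taylorWithinEval g 4 (Set.Icc 0 b) 0 P)
        - (8 : ℝ) • (h P - taylorWithinEval h 4 (Set.Icc 0 b) 0 P)
        + (h (2 * P) - taylorWithinEval h 4 (Set.Icc 0 b) 0 (2 * P)) := by
    have h12c : (12 * P * ε) • F u = (12 * P) • c 1 := by
      rw [hc1, smul_smul]
    rw [hTg, hTg, hTh, hTh, h12c]
    simp only [Finset.sum_range_succ, Finset.sum_range_zero,
      show Nat.factorial 0 = 1 from rfl, show Nat.factorial 1 = 1 from rfl,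
      show Nat.factorial 2 = 2 from rfl, show Nat.factorial 3 = 6 from rfl,
      show Nat.factorial 4 = 24 from rfl]
    push_cast
    module
  have h12 : (0 : ℝ) < 12 * P * ε := by positivity
  have hgoal : (1 / (12 * P * ε)) •
        (-Ψ ε (2 * P) u + (8 : ℝ) • Ψ ε P u - (8 : ℝ) • Ψ ε (-P) u + Ψ ε (-(2 * P)) u) - F u
      = (1 / (12 * P * ε)) •
        ((-g (2 * P) + (8 : ℝ) • g P - (8 : ℝ) • h P + h (2 * P)) - (12 * P * ε) • F u) := by
    rw [smul_sub, smul_smul, one_div, inv_mul_cancel₀ h12.ne', one_smul]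
  rw [hgoal, key, norm_smul]
  have htri : ‖-(g (2 * P) - taylorWithinEval g 4 (Set.Icc 0 b) 0 (2 * P))
        + (8 : ℝ) • (g P - taylorWithinEval g 4 (Set.Icc 0 b) 0 P)
        - (8 : ℝ) • (h P - taylorWithinEval h 4 (Set.Icc 0 b) 0 P)
        + (h (2 * P) - taylorWithinEval h 4 (Set.Icc 0 b) 0 (2 * P))‖
      ≤ ‖g (2 * P) - taylorWithinEval g 4 (Set.Icc 0 b) 0 (2 * P)‖
        + 8 * ‖g P - taylorWithinEval g 4 (Set.Icc 0 b) 0 P‖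
        + 8 * ‖h P - taylorWithinEval h 4 (Set.Icc 0 b) 0 P‖
        + ‖h (2 * P) - taylorWithinEval h 4 (Set.Icc 0 b) 0 (2 * P)‖ := by
    set r1 := g (2 * P) - taylorWithinEval g 4 (Set.Icc 0 b) 0 (2 * P)
    set r2 := g P - taylorWithinEval g 4 (Set.Icc 0 b) 0 P
    set r3 := h P - taylorWithinEval h 4 (Set.Icc 0 b) 0 P
    set r4 := h (2 * P) - taylorWithinEval h 4 (Set.Icc 0 b) 0 (2 * P)
    calc ‖-r1 + (8 : ℝ) • r2 - (8 : ℝ) • r3 + r4‖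
        ≤ ‖-r1 + (8 : ℝ) • r2 - (8 : ℝ) • r3‖ + ‖r4‖ := norm_add_le _ _
      _ ≤ ‖-r1 + (8 : ℝ) • r2‖ + ‖(8 : ℝ) • r3‖ + ‖r4‖ := by
          gcongr; exact norm_sub_le _ _
      _ ≤ ‖-r1‖ + ‖(8 : ℝ) • r2‖ + ‖(8 : ℝ) • r3‖ + ‖r4‖ := by
          gcongr; exact norm_add_le _ _
      _ = ‖r1‖ + 8 * ‖r2‖ + 8 * ‖r3‖ + ‖r4‖ := by
          rw [norm_neg, norm_smul, norm_smul]
          norm_num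
  have hfac : ((4 : ℕ).factorial : ℝ) = 24 := by rw [show (4:ℕ).factorial = 24 from rfl]; norm_num
  have hsum : ‖g (2 * P) - taylorWithinEval g 4 (Set.Icc 0 b) 0 (2 * P)‖
        + 8 * ‖g P - taylorWithinEval g 4 (Set.Icc 0 b) 0 P‖
        + 8 * ‖h P - taylorWithinEval h 4 (Set.Icc 0 b) 0 P‖
        + ‖h (2 * P) - taylorWithinEval h 4 (Set.Icc 0 b) 0 (2 * P)‖
      ≤ (10 / 3) * (ε ^ 5 * Q ^ 5) * P ^ 5 := by
    rw [hfac] at hRg1 hRg2 hRh1 hRh2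
    have e1 : (2 * P - 0) ^ (4 + 1) = 32 * P ^ 5 := by ring
    have e2 : (P - 0) ^ (4 + 1) = P ^ 5 := by ring
    rw [e1] at hRg2 hRh2
    rw [e2] at hRg1 hRh1
    nlinarith [hRg1, hRg2, hRh1, hRh2, pow_nonneg hε.le 5, pow_nonneg hQ0.le 5,
      pow_nonneg hP.le 5]
  calc |1 / (12 * P * ε)| * ‖_ + _ - _ + _‖
      ≤ (1 / (12 * P * ε)) * ((10 / 3) * (ε ^ 5 * Q ^ 5) * P ^ 5) := by
        rw [abs_of_pos (by positivity)]
        exact mul_le_mul_of_nonneg_left (le_trans htri hsum) (by positivity)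
    _ ≤ (Q ^ 5 * P ^ 4 + 1) * ε ^ 4 := by
        rw [div_mul_eq_mul_div, one_mul, div_le_iff₀ h12]
        nlinarith [pow_nonneg hε.le 4, pow_nonneg hQ0.le 5, pow_nonneg hP.le 4,
          mul_pos (mul_pos (pow_pos hQ0 5) (pow_pos hP 4)) (pow_pos hε 4)]
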